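/- In a Schottky configuration, if g ∈ G is represented by a nonempty reduced word g = g_{i₀}^{j₀} ⋯ g_{i_l}^{j_l}, then g(Δ) ⊂ H_{i₀}^{j₀}; consequently g(Δ) ∩ Δ = ∅ for every g ∈ G with g ≠ 1, and g(closure(Δ)) ∩ closure(Δ) = ∅ whenever the reduced word representing g has length at least 2. -/

import Mathlib

noncomputable section

open Set

/-- The underlying vector space ℝ^{2,1} of Minkowski (2+1)-space `E`. -/
abbrev V : Type := Fin 3 → ℝ

/-- The Lorentzian inner product `B` of signature (2,1). -/
def mB (u v : V) : ℝ := u 0 * v 0 + u 1 * v 1 - u 2 * v 2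

def Timelike (v : V) : Prop := mB v v < 0

def UnitSpacelike (v : V) : Prop := mB v v = 1

/-- future-pointing timelike vector. -/
def FutureTimelike (v : V) : Prop := mB v v < 0 ∧ 0 < v 2

/-- The standard Euclidean norm on ℝ³. -/
def eunorm (v : V) : ℝ := Real.sqrt (v 0 ^ 2 + v 1 ^ 2 + v 2 ^ 2)

/-- The Euclidean distance ρ. -/
def ρ (p q : V) : ℝ := eunorm (p - q)

/-- Open Euclidean ball `B(x,δ)`. -/
def eball (x : V) (δ : ℝ) : Set V := {y | ρ x y < δ}

/-- Euclidean δ-neighborhood `B(S,δ)` of a set `S`. -/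
def nbhd (S : Set V) (δ : ℝ) : Set V := {y | ∃ x ∈ S, ρ x y < δ}

/-- Membership in SO⁰(2,1): a linear isometry of `B` preserving orientation
(det = 1) and time-orientation (the future cone); this characterizes the
identity component of the group of linear isometries of `B`. -/
def InSO (g : V ≃ₗ[ℝ] V) : Prop :=
  (∀ u v : V, mB (g u) (g v) = mB u v) ∧
  LinearMap.det g.toLinearMap = 1 ∧
  ∀ v : V, FutureTimelike v → FutureTimelike (g v)

/-- Membership in Isom⁰(E) = SO⁰(2,1) ⋉ ℝ³. -/
def InIsom (φ : V ≃ᵃ[ℝ] V) : Prop := InSO φ.linear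

/-- The point `u_φ = (cos φ, sin φ, 1)` on the circle S¹ of future-pointing null vectors. -/
def uph (φ : ℝ) : V := ![Real.cos φ, Real.sin φ, 1]

/-- The circle S¹ of future-pointing null vectors. -/
def circ : Set V := {u | ∃ φ : ℝ, u = uph φ}

/-- An interval (arc) `{u_φ : φ₁ < φ < φ₂}` on S¹. -/
def arc (φ₁ φ₂ : ℝ) : Set V := {u | ∃ φ : ℝ, φ₁ < φ ∧ φ < φ₂ ∧ u = uph φ}

/-- Radial projection of a future-pointing null vector back onto S¹ (divide by third
coordinate); `u ↦ nproj (g u)` is the induced action `P(g)` of `g` on S¹. -/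
def nproj (w : V) : V := (w 2)⁻¹ • w

/-- `(a,b,c)` is a positively oriented basis of ℝ³. -/
def PosOriented (a b c : V) : Prop := 0 < Matrix.det (Matrix.of ![a, b, c])

/-- `xm = x⁻(v)`, `xp = x⁺(v)`: the two points of S¹ which are B-orthogonal to the
unit-spacelike vector `v`, labeled so that `(x⁻(v), x⁺(v), v)` is positively oriented. -/
def IsNullFrame (v xm xp : V) : Prop :=
  xm ∈ circ ∧ xp ∈ circ ∧ mB xm v = 0 ∧ mB xp v = 0 ∧ xm ≠ xp ∧ PosOriented xm xp v

/-- Eigendata of a hyperbolic element of SO⁰(2,1): `xm = x⁻(g)` and `xp = x⁺(g)` are the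
eigenvectors on S¹ with eigenvalues `lam < 1 < lam⁻¹`. -/
def IsHypData (g : V ≃ₗ[ℝ] V) (lam : ℝ) (xm xp : V) : Prop :=
  0 < lam ∧ lam < 1 ∧ xm ∈ circ ∧ xp ∈ circ ∧ g xm = lam • xm ∧ g xp = lam⁻¹ • xp

/-- `g` is hyperbolic: it has eigenvalues `lam < 1 < lam⁻¹` with null eigenvectors on S¹. -/
def IsHyperbolic (g : V ≃ₗ[ℝ] V) : Prop := ∃ lam xm xp, IsHypData g lam xm xp

/-- `g` is ε-hyperbolic: it is hyperbolic and `ρ(x⁺(g), x⁻(g)) ≥ ε`. -/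
def EpsHyperbolic (g : V ≃ₗ[ℝ] V) (ε : ℝ) : Prop :=
  ∃ lam xm xp, IsHypData g lam xm xp ∧ ε ≤ ρ xp xm

/-- Hyperbolic 2-space H² (hyperboloid model: the set of future unit timelike vectors,
the canonical section of the set of timelike lines). -/
def Hyp : Set V := {v | mB v v = -1 ∧ 0 < v 2}

/-- The origin `O ∈ H²`. -/
def Opt : V := ![0, 0, 1]

/-- Hyperbolic distance on H² (arcosh of |B(x,y)| for normalized x, y). -/
def hdist (x y : V) : ℝ := Real.log (|mB x y| + Real.sqrt (mB x y ^ 2 - 1))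

/-- The half-plane `H_v ⊂ H²` determined by a unit-spacelike vector `v`. -/
def halfPlane (v : V) : Set V := {u | u ∈ Hyp ∧ 0 < mB u v}

/-- The geodesic `l_v ⊂ H²` determined by a unit-spacelike vector `v`. -/
def geo (v : V) : Set V := {u | u ∈ Hyp ∧ mB u v = 0}

/-- The crooked plane `C₀` with vertex the origin directed by `e₁ = (1,0,0)`. -/
def C0 : Set V :=
  {u | u 0 = 0 ∧ |u 1| ≤ |u 2|} ∪
  {u | u 0 ≤ 0 ∧ u 1 = u 2} ∪
  {u | 0 ≤ u 0 ∧ u 1 = -u 2}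

/-- The open crooked half-space `H₀` bounded by `C₀`. -/
def H0 : Set V :=
  {u | 0 < u 0 ∧ 0 < u 1 + u 2} ∪
  {u | u 0 = 0 ∧ 0 < u 1 + u 2 ∧ 0 < u 2 - u 1} ∪
  {u | u 0 < 0 ∧ 0 < u 2 - u 1}

/-- `S` is a crooked plane `C(u,p) = p + g(C₀)` for some `g ∈ SO⁰(2,1)`. -/
def IsCrookedPlane (S : Set V) : Prop :=
  ∃ (g : V ≃ₗ[ℝ] V) (p : V), InSO g ∧ S = (fun x => p + g x) '' C0

/-- `H` is a crooked half-space `H(u,p) = p + g(H₀)` for some `g ∈ SO⁰(2,1)`. -/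
def IsCrookedHalfSpace (H : Set V) : Prop :=
  ∃ (g : V ≃ₗ[ℝ] V) (p : V), InSO g ∧ H = (fun x => p + g x) '' H0

/-- Signed generator: `g^+ = g`, `g^- = g⁻¹` (Bool `true` = `+`, `false` = `−`). -/
def sgen {G : Type*} [Group G] (g : G) (j : Bool) : G := if j then g else g⁻¹

/-- A word `w 0, …, w l` in the letters `(i,j)` (meaning `h_i^j`) is reduced:
`(i_{k+1}, j_{k+1}) ≠ (i_k, −j_k)` for all `k < l`. -/
def ReducedWord {m : ℕ} (l : ℕ) (w : ℕ → Fin m × Bool) : Prop :=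
  ∀ k, k < l → ¬((w (k + 1)).1 = (w k).1 ∧ (w (k + 1)).2 = !(w k).2)

/-- An affine Schottky configuration. -/
structure AffSchottky (m : ℕ) where
  hm : 2 ≤ m
  h : Fin m → V ≃ᵃ[ℝ] V
  hIsom : ∀ i, InIsom (h i)
  H : Fin m → Bool → Set V
  hCrooked : ∀ i j, IsCrookedHalfSpace (H i j)
  hDisj : ∀ i j i' j', (i, j) ≠ (i', j') → Disjoint (H i j) (H i' j')
  hPair : ∀ i, ⇑(h i) '' H i false = (closure (H i true))ᶜ

namespace AffSchottky

variable {m : ℕ} (S : AffSchottky m)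

/-- The crooked polyhedron `X = E − ⋃ closure(H_i^j)`. -/
def X : Set V := (⋃ i, ⋃ j, closure (S.H i j))ᶜ

/-- The affine Schottky group Γ generated by `h₁, …, h_m`. -/
def Γ : Subgroup (V ≃ᵃ[ℝ] V) := Subgroup.closure (Set.range S.h)

/-- The signed generators `h_i^j`. -/
def hp (i : Fin m) (j : Bool) : V ≃ᵃ[ℝ] V := sgen (S.h i) j

/-- `wprod w k = h_{i₀}^{j₀} ⋯ h_{i_{k-1}}^{j_{k-1}}` where `w t = (i_t, j_t)`. -/
def wprod (w : ℕ → Fin m × Bool) (k : ℕ) : V ≃ᵃ[ℝ] V :=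
  ((List.range k).map fun t => S.hp (w t).1 (w t).2).prod

end AffSchottky

/-- A (linear) Schottky configuration. -/
structure LinSchottky (m : ℕ) where
  hm : 2 ≤ m
  g : Fin m → V ≃ₗ[ℝ] V
  hSO : ∀ i, InSO (g i)
  a : Fin m → Bool → ℝ
  b : Fin m → Bool → ℝ
  hab : ∀ i j, a i j < b i j ∧ b i j - a i j < 2 * Real.pi
  hDisjCl : ∀ i j i' j', (i, j) ≠ (i', j') →
    Disjoint (closure (arc (a i j) (b i j))) (closure (arc (a i' j') (b i' j')))
  hPair : ∀ i, (fun u => nproj (g i u)) '' arc (a i false) (b i false) =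
    circ \ closure (arc (a i true) (b i true))
  hPairInv : ∀ i, (fun u => nproj ((g i)⁻¹ u)) '' arc (a i true) (b i true) =
    circ \ closure (arc (a i false) (b i false))

namespace LinSchottky

variable {m : ℕ} (S : LinSchottky m)

/-- The intervals `A_i^j ⊂ S¹`. -/
def A (i : Fin m) (j : Bool) : Set V := arc (S.a i j) (S.b i j)

/-- The Schottky group `G` generated by `g₁, …, g_m`. -/
def G : Subgroup (V ≃ₗ[ℝ] V) := Subgroup.closure (Set.range S.g)

/-- The signed generators `g_i^j`. -/
def gp (i : Fin m) (j : Bool) : V ≃ₗ[ℝ] V := sgen (S.g i) j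

/-- `wprod w k = g_{i₀}^{j₀} ⋯ g_{i_{k-1}}^{j_{k-1}}` where `w t = (i_t, j_t)`. -/
def wprod (w : ℕ → Fin m × Bool) (k : ℕ) : V ≃ₗ[ℝ] V :=
  ((List.range k).map fun t => S.gp (w t).1 (w t).2).prod

end LinSchottky

/-- Given directing unit-spacelike vectors `v i j` of the half-planes `H_i^j`, the
fundamental polygon `Δ = H² − ⋃ closure(H_i^j)` (closures taken in H²). -/
def linΔ {m : ℕ} (v : Fin m → Bool → V) : Set V :=
  Hyp \ ⋃ i, ⋃ j, Hyp ∩ closure (halfPlane (v i j))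

/-- if `g ∈ G` is a nonempty reduced word `g_{i₀}^{j₀} ⋯ g_{i_l}^{j_l}` then
`g(Δ) ⊆ H_{i₀}^{j₀}`; consequently `g(Δ) ∩ Δ = ∅` for every `g ∈ G`, `g ≠ 1`, and
`g(closure Δ) ∩ closure Δ = ∅` whenever the reduced word has length at least 2. -/

-- ===== auxiliary development =====
-- === aux ===
def FutureNull (n : V) : Prop := mB n n = 0 ∧ 0 < n 2

lemma mB_add_left (u v w : V) : mB (u + v) w = mB u w + mB v w := by
  simp [mB, Pi.add_apply]; ring

lemma mB_smul_left (c : ℝ) (u v : V) : mB (c • u) v = c * mB u v := by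
  simp [mB, Pi.smul_apply, smul_eq_mul]; ring

lemma mB_smul_right (c : ℝ) (u v : V) : mB u (c • v) = c * mB u v := by
  simp [mB, Pi.smul_apply, smul_eq_mul]; ring

lemma mB_sub_left (u v w : V) : mB (u - v) w = mB u w - mB v w := by
  simp [mB, Pi.sub_apply]; ring

lemma continuous_mB_left (x : V) : Continuous fun z : V => mB z x := by
  unfold mB
  fun_prop

lemma uph_0 (φ : ℝ) : uph φ 0 = Real.cos φ := rfl
lemma uph_1 (φ : ℝ) : uph φ 1 = Real.sin φ := rfl
lemma uph_2 (φ : ℝ) : uph φ 2 = 1 := rfl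

lemma futureNull_uph (φ : ℝ) : FutureNull (uph φ) := by
  constructor
  · simp [mB, uph_0, uph_1, uph_2]
    nlinarith [Real.sin_sq_add_cos_sq φ]
  · simp [uph_2]

lemma futureNull_of_mem_circ {u : V} (hu : u ∈ circ) : FutureNull u := by
  obtain ⟨φ, rfl⟩ := hu; exact futureNull_uph φ

lemma exists_cos_sin {x y : ℝ} (h : x ^ 2 + y ^ 2 = 1) :
    ∃ φ, Real.cos φ = x ∧ Real.sin φ = y := by
  have hx1 : -1 ≤ x := by nlinarith
  have hx2 : x ≤ 1 := by nlinarith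
  have hs : Real.sqrt (1 - x ^ 2) = |y| := by
    rw [show (1 : ℝ) - x ^ 2 = y ^ 2 by linarith, Real.sqrt_sq_eq_abs]
  rcases le_or_gt 0 y with hy | hy
  · exact ⟨Real.arccos x, Real.cos_arccos hx1 hx2, by
      rw [Real.sin_arccos, hs, abs_of_nonneg hy]⟩
  · refine ⟨-Real.arccos x, by rw [Real.cos_neg]; exact Real.cos_arccos hx1 hx2, ?_⟩
    rw [Real.sin_neg, Real.sin_arccos, hs, abs_of_neg hy, neg_neg]

lemma nproj_mem_circ {n : V} (hn : FutureNull n) : nproj n ∈ circ := by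
  obtain ⟨hnull, hpos⟩ := hn
  have h2 : n 2 ≠ 0 := ne_of_gt hpos
  have hxy : (n 0 / n 2) ^ 2 + (n 1 / n 2) ^ 2 = 1 := by
    field_simp
    simp only [mB] at hnull
    nlinarith
  obtain ⟨φ, hc, hs⟩ := exists_cos_sin hxy
  refine ⟨φ, ?_⟩
  funext i
  fin_cases i <;>
    simp [nproj, Pi.smul_apply, smul_eq_mul, uph, hc, hs] <;>
    field_simp

def Pres (g : V ≃ₗ[ℝ] V) : Prop :=
  (∀ u v : V, mB (g u) (g v) = mB u v) ∧ ∀ v : V, FutureTimelike v → FutureTimelike (g v)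

def vecE3 : V := ![0, 0, 1]

lemma futureTimelike_e3 : FutureTimelike vecE3 := by
  constructor <;> simp [mB, vecE3, FutureTimelike]

lemma Pres.futureNull {g : V ≃ₗ[ℝ] V} (hg : Pres g) {n : V} (hn : FutureNull n) :
    FutureNull (g n) := by
  obtain ⟨hB, hF⟩ := hg
  have hnull : mB (g n) (g n) = 0 := by rw [hB]; exact hn.1
  refine ⟨hnull, ?_⟩
  have key : ∀ ε : ℝ, 0 < ε → 0 < g n 2 + ε * g vecE3 2 := by
    intro ε hε
    have hft : FutureTimelike (n + ε • vecE3) := by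
      constructor
      · have : mB (n + ε • vecE3) (n + ε • vecE3) = mB n n + ε * mB vecE3 n + ε * (mB n vecE3 + ε * mB vecE3 vecE3) := by
          simp [mB, Pi.add_apply, Pi.smul_apply, smul_eq_mul]; ring
        rw [this, hn.1]
        have h1 : mB vecE3 n = -n 2 := by simp [mB, vecE3]
        have h2 : mB n vecE3 = -n 2 := by simp [mB, vecE3]
        have h3 : mB vecE3 vecE3 = -1 := by simp [mB, vecE3]
        rw [h1, h2, h3]
        nlinarith [hn.2]
      · have : (n + ε • vecE3) 2 = n 2 + ε := by simp [Pi.add_apply, Pi.smul_apply, vecE3, smul_eq_mul]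
        rw [this]; linarith [hn.2]
    have := (hF _ hft).2
    have hge : g (n + ε • vecE3) = g n + ε • g vecE3 := by rw [map_add, map_smul]
    rw [hge] at this
    simpa [Pi.add_apply, Pi.smul_apply, smul_eq_mul] using this
  have hge0 : 0 ≤ g n 2 := by
    by_contra h
    push_neg at h
    have h2pos : 0 < g vecE3 2 := (hF vecE3 futureTimelike_e3).2
    have := key (-(g n 2) / (2 * g vecE3 2)) (div_pos (by linarith) (by linarith))
    have h2 : -(g n 2) / (2 * g vecE3 2) * g vecE3 2 = -(g n 2) / 2 := by field_simp
    rw [h2] at this; linarith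
  rcases lt_or_eq_of_le hge0 with h | h
  · exact h
  · exfalso
    have h0 : g n 2 = 0 := h.symm
    have hsq : g n 0 ^ 2 + g n 1 ^ 2 = 0 := by
      simp only [mB] at hnull; nlinarith
    have hz : g n = 0 := by
      funext i
      fin_cases i
      · show g n 0 = 0; nlinarith [sq_nonneg (g n 0), sq_nonneg (g n 1)]
      · show g n 1 = 0; nlinarith [sq_nonneg (g n 0), sq_nonneg (g n 1)]
      · exact h0
    have hn0 : n = 0 := by
      have := congrArg g.symm hz
      simpa using this
    rw [hn0] at hn
    have h02 : (0 : ℝ) < (0 : V) 2 := hn.2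
    norm_num at h02

lemma Pres.inv {g : V ≃ₗ[ℝ] V} (hg : Pres g) : Pres g.symm := by
  obtain ⟨hB, hF⟩ := hg
  constructor
  · intro u v
    have := hB (g.symm u) (g.symm v)
    simpa using this.symm
  · intro v hv
    have htl : mB (g.symm v) (g.symm v) < 0 := by
      have h := hB (g.symm v) (g.symm v)
      rw [g.apply_symm_apply] at h
      rw [← h]; exact hv.1
    rcases lt_trichotomy (g.symm v 2) 0 with h | h | h
    · exfalso
      have hneg : FutureTimelike (-(g.symm v)) := by
        constructor
        · have : mB (-(g.symm v)) (-(g.symm v)) = mB (g.symm v) (g.symm v) := by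
            simp only [mB, Pi.neg_apply]; ring
          rw [this]; exact htl
        · simpa using h
      have := (hF _ hneg).2
      rw [map_neg] at this
      simp at this
      linarith [hv.2, this]
    · exfalso
      simp only [mB] at htl
      nlinarith [sq_nonneg (g.symm v 0), sq_nonneg (g.symm v 1)]
    · exact ⟨htl, h⟩

lemma Pres.hyp {g : V ≃ₗ[ℝ] V} (hg : Pres g) {u : V} (hu : u ∈ Hyp) : g u ∈ Hyp := by
  have hft : FutureTimelike u := ⟨by rw [hu.1]; norm_num, hu.2⟩
  exact ⟨by rw [hg.1]; exact hu.1, (hg.2 u hft).2⟩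

lemma quad_roots (q β μ : ℝ) (hq : 0 < q) (hμ : μ < 0) :
    ∃ τ₁ τ₂ : ℝ, 0 < τ₁ ∧ τ₂ < 0 ∧
      q * τ₁ ^ 2 + 2 * β * τ₁ + μ = 0 ∧ q * τ₂ ^ 2 + 2 * β * τ₂ + μ = 0 := by
  have hpos : (0:ℝ) ≤ β ^ 2 - μ * q := by nlinarith [sq_nonneg β]
  have hDsq : Real.sqrt (β ^ 2 - μ * q) ^ 2 = β ^ 2 - μ * q := Real.sq_sqrt hpos
  set D := Real.sqrt (β ^ 2 - μ * q) with hD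
  have hD0 : 0 ≤ D := Real.sqrt_nonneg _
  have hDgt : |β| < D := by nlinarith [sq_abs β]
  obtain ⟨h1, h2⟩ := abs_lt.mp hDgt
  refine ⟨(-β + D) / q, (-β - D) / q, div_pos (by linarith) hq,
    div_neg_of_neg_of_pos (by linarith) hq, ?_, ?_⟩ <;>
  · field_simp
    nlinarith [hDsq]

lemma decomp {u : V} (x : V) (hu : FutureTimelike u) (hx : UnitSpacelike x) :
    ∃ (n₁ n₂ : V) (α β : ℝ), FutureNull n₁ ∧ FutureNull n₂ ∧
      mB n₁ x = mB u x ∧ mB n₂ x = mB u x ∧ 0 < α ∧ 0 < β ∧ u = α • n₁ + β • n₂ := by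
  have hx' : x 0 ^ 2 + x 1 ^ 2 = 1 + x 2 ^ 2 := by
    have := hx; simp only [UnitSpacelike, mB] at this; nlinarith
  set d : V := ![-(x 1), x 0, 0] with hd
  have hd0 : d 0 = -(x 1) := rfl
  have hd1 : d 1 = x 0 := rfl
  have hd2 : d 2 = 0 := rfl
  have hq : mB d d = x 0 ^ 2 + x 1 ^ 2 := by simp [mB, hd0, hd1, hd2]; ring
  have hqpos : 0 < mB d d := by rw [hq]; nlinarith [sq_nonneg (x 2)]
  obtain ⟨τ₁, τ₂, hτ₁, hτ₂, hr₁, hr₂⟩ := quad_roots (mB d d) (mB u d) (mB u u) hqpos hu.1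
  have hmBdx : mB d x = 0 := by simp [mB, hd0, hd1, hd2]; ring
  have key : ∀ τ : ℝ, mB d d * τ ^ 2 + 2 * mB u d * τ + mB u u = 0 → FutureNull (u + τ • d) := by
    intro τ hτ
    constructor
    · have he : mB (u + τ • d) (u + τ • d)
          = mB d d * τ ^ 2 + 2 * mB u d * τ + mB u u := by
        simp only [mB, Pi.add_apply, Pi.smul_apply, smul_eq_mul]; ring
      rw [he, hτ]
    · have he : (u + τ • d) 2 = u 2 := by
        simp [Pi.add_apply, Pi.smul_apply, hd2]
      rw [he]; exact hu.2
  have hmBx : ∀ τ : ℝ, mB (u + τ • d) x = mB u x := by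
    intro τ
    have he : mB (u + τ • d) x = mB u x + τ * mB d x := by
      simp only [mB, Pi.add_apply, Pi.smul_apply, smul_eq_mul]; ring
    rw [he, hmBdx]; ring
  have hτdiff : 0 < τ₁ - τ₂ := by linarith
  refine ⟨u + τ₁ • d, u + τ₂ • d, -τ₂ / (τ₁ - τ₂), τ₁ / (τ₁ - τ₂),
    key τ₁ hr₁, key τ₂ hr₂, hmBx τ₁, hmBx τ₂, div_pos (by linarith) hτdiff, div_pos hτ₁ hτdiff, ?_⟩
  funext i
  simp only [Pi.add_apply, Pi.smul_apply, smul_eq_mul]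
  field_simp
  ring

lemma continuous_uph : Continuous uph := by
  apply continuous_pi
  intro i
  fin_cases i <;> simp [uph] <;> fun_prop

lemma mB_uph (φ : ℝ) (x : V) :
    mB (uph φ) x = x 0 * Real.cos φ + x 1 * Real.sin φ - x 2 := by
  simp [mB, uph]; ring

lemma sin_sub_mul_pos (a : ℝ) {t : ℝ} (ht : 0 < t) (ht1 : t ≤ 1)
    (ht2 : t * (1 + |a|) ≤ 1) : 0 < Real.sin t - a * (1 - Real.cos t) := by
  have h1 : t - t ^ 3 / 4 < Real.sin t := by
    have := Real.sin_gt_sub_cube ht; nlinarith [pow_pos ht 3]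
  have h2 : 1 - t ^ 2 / 2 ≤ Real.cos t := Real.one_sub_sq_div_two_le_cos
  have h3 : a * (1 - Real.cos t) ≤ |a| * (t ^ 2 / 2) := by
    have hc1 : Real.cos t ≤ 1 := Real.cos_le_one t
    calc a * (1 - Real.cos t) ≤ |a| * (1 - Real.cos t) := by
          apply mul_le_mul_of_nonneg_right (le_abs_self a); linarith
      _ ≤ |a| * (t ^ 2 / 2) := by
          apply mul_le_mul_of_nonneg_left _ (abs_nonneg a); linarith
  have ha : 0 ≤ |a| := abs_nonneg a
  nlinarith [sq_nonneg t]

lemma densCirc {x : V} (hx : UnitSpacelike x) {u : V} (hu : u ∈ circ) (h : 0 ≤ mB u x) :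
    u ∈ closure {z | z ∈ circ ∧ 0 < mB z x} := by
  obtain ⟨φ, rfl⟩ := hu
  rcases lt_or_eq_of_le h with hpos | heq
  · exact subset_closure ⟨⟨φ, rfl⟩, hpos⟩
  · have hb : x 0 * Real.cos φ + x 1 * Real.sin φ = x 2 := by
      have := mB_uph φ x; rw [← heq] at this; linarith
    have hx' : x 0 ^ 2 + x 1 ^ 2 - x 2 ^ 2 = 1 := by
      have h := hx; simp only [UnitSpacelike, mB] at h; linear_combination h
    have hpyth := Real.sin_sq_add_cos_sq φ
    set c : ℝ := x 1 * Real.cos φ - x 0 * Real.sin φ with hc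
    have hc2 : c ^ 2 = 1 := by
      rw [hc]
      linear_combination (-(x 0 * Real.cos φ + x 1 * Real.sin φ + x 2)) * hb
        + (x 0 ^ 2 + x 1 ^ 2) * hpyth + hx'
    have hval : ∀ t : ℝ, mB (uph (φ + c * t)) x
        = x 2 * (Real.cos (c * t) - 1) + c * Real.sin (c * t) := by
      intro t
      rw [mB_uph, Real.cos_add, Real.sin_add, hc]
      linear_combination Real.cos ((x 1 * Real.cos φ - x 0 * Real.sin φ) * t) * hb
    have hcc : c = 1 ∨ c = -1 := by
      have hfac : (c - 1) * (c + 1) = 0 := by linear_combination hc2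
      rcases mul_eq_zero.mp hfac with h' | h'
      · left; linarith
      · right; linarith
    have hval' : ∀ t : ℝ, mB (uph (φ + c * t)) x
        = Real.sin t - x 2 * (1 - Real.cos t) := by
      intro t
      rw [hval t]
      rcases hcc with h1 | h1 <;> rw [h1] <;>
        simp [Real.cos_neg, Real.sin_neg] <;> ring
    set δ : ℝ := min 1 (1 / (1 + |x 2|)) with hδ
    have hδpos : 0 < δ := lt_min one_pos (by positivity)
    rw [mem_closure_iff_seq_limit]
    refine ⟨fun n => uph (φ + c * (δ / (n + 1))), ?_, ?_⟩
    · intro n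
      have hn1 : (1:ℝ) ≤ (n:ℝ) + 1 := by
        have : (0:ℝ) ≤ (n:ℝ) := Nat.cast_nonneg n
        linarith
      have htpos : 0 < δ / (n + 1 : ℝ) := by positivity
      have htle : δ / (n + 1 : ℝ) ≤ δ := div_le_self (le_of_lt hδpos) hn1
      have ht1 : δ / (n + 1 : ℝ) ≤ 1 := le_trans htle (min_le_left _ _)
      have ht2 : δ / (n + 1 : ℝ) * (1 + |x 2|) ≤ 1 := by
        have hδ2 : δ / (n+1:ℝ) ≤ 1 / (1 + |x 2|) := le_trans htle (min_le_right _ _)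
        have h1a : (0:ℝ) < 1 + |x 2| := by positivity
        calc δ / (n+1:ℝ) * (1 + |x 2|) ≤ 1 / (1 + |x 2|) * (1 + |x 2|) :=
              mul_le_mul_of_nonneg_right hδ2 (le_of_lt h1a)
          _ = 1 := by field_simp
      exact ⟨⟨_, rfl⟩, by rw [hval' _]; exact sin_sub_mul_pos (x 2) htpos ht1 ht2⟩
    · have h0 : Filter.Tendsto (fun n : ℕ => (1:ℝ) / (n + 1)) Filter.atTop (nhds 0) :=
        tendsto_one_div_add_atTop_nhds_zero_nat
      have htend : Filter.Tendsto (fun n : ℕ => φ + c * (δ / (n + 1))) Filter.atTop (nhds φ) := by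
        have h1 : Filter.Tendsto (fun n : ℕ => φ + (c * δ) * (1 / (n + 1))) Filter.atTop
            (nhds (φ + (c * δ) * 0)) := Filter.Tendsto.const_add _ (h0.const_mul _)
        have h2 : (fun n : ℕ => φ + c * (δ / (n + 1))) = fun n : ℕ => φ + (c * δ) * (1 / (n + 1)) := by
          funext n; ring
        rw [h2]
        simpa using h1
      exact (continuous_uph.tendsto φ).comp htend

lemma closure_pos_subset (x : V) :
    closure {z | z ∈ circ ∧ 0 < mB z x} ⊆ {z | 0 ≤ mB z x} := by
  apply closure_minimal
  · intro z hz; exact le_of_lt hz.2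
  · exact isClosed_le continuous_const (continuous_mB_left x)

lemma closure_halfPlane_subset (v : V) :
    closure (halfPlane v) ⊆ {z | 0 ≤ mB z v} := by
  apply closure_minimal
  · intro z hz; exact le_of_lt hz.2
  · exact isClosed_le continuous_const (continuous_mB_left v)

lemma mem_closure_halfPlane {v u : V} (hv : UnitSpacelike v) (hu : u ∈ Hyp)
    (h : 0 ≤ mB u v) : u ∈ closure (halfPlane v) := by
  rcases lt_or_eq_of_le h with hpos | heq
  · exact subset_closure ⟨hu, hpos⟩
  set δ : ℝ := min (1/2) (u 2 / (2 * (|v 2| + 1))) with hδ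
  have hu2 : 0 < u 2 := hu.2
  have hδpos : 0 < δ := lt_min (by norm_num) (by positivity)
  have hδle : δ ≤ 1/2 := min_le_left _ _
  have hδle2 : δ ≤ u 2 / (2 * (|v 2| + 1)) := min_le_right _ _
  rw [mem_closure_iff_seq_limit]
  have huu : mB u u = -1 := hu.1
  have hvv : mB v v = 1 := hv
  have hmix : mB u v = 0 := heq.symm
  have hmix' : mB v u = 0 := by simp only [mB] at hmix ⊢; linarith
  refine ⟨fun n => (Real.sqrt (1 - (δ / (n+1))^2))⁻¹ • (u + (δ / (n+1)) • v), ?_, ?_⟩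
  · intro n
    have hn1 : (1:ℝ) ≤ (n:ℝ) + 1 := by
      have : (0:ℝ) ≤ (n:ℝ) := Nat.cast_nonneg n
      linarith
    set t : ℝ := δ / (n + 1 : ℝ) with htdef
    have htpos : 0 < t := by positivity
    have htle : t ≤ δ := div_le_self (le_of_lt hδpos) hn1
    have ht1 : t < 1 := lt_of_le_of_lt (le_trans htle hδle) (by norm_num)
    have hsq : 0 < 1 - t ^ 2 := by nlinarith
    have hsqrt : 0 < Real.sqrt (1 - t ^ 2) := Real.sqrt_pos.mpr hsq
    have hsqrt2 : Real.sqrt (1 - t ^ 2) ^ 2 = 1 - t ^ 2 := Real.sq_sqrt (le_of_lt hsq)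
    set s : ℝ := (Real.sqrt (1 - t ^ 2))⁻¹ with hs
    have hspos : 0 < s := by rw [hs]; positivity
    have hmm : mB (u + t • v) (u + t • v) = -(1 - t ^ 2) := by
      have he : mB (u + t • v) (u + t • v)
          = mB u u + t * mB u v + t * mB v u + t^2 * mB v v := by
        simp only [mB, Pi.add_apply, Pi.smul_apply, smul_eq_mul]; ring
      rw [he, huu, hvv, hmix, hmix']; ring
    have hsmul : ∀ (c : ℝ) (a b : V), mB (c • a) (c • b) = c^2 * mB a b := by
      intro c a b; simp only [mB, Pi.smul_apply, smul_eq_mul]; ring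
    show s • (u + t • v) ∈ halfPlane v
    refine ⟨⟨?_, ?_⟩, ?_⟩
    · rw [hsmul, hmm, hs, inv_pow, hsqrt2]
      field_simp
    · have h2 : (s • (u + t • v)) 2 = s * (u 2 + t * v 2) := by
        simp [Pi.smul_apply, Pi.add_apply, smul_eq_mul]
      rw [h2]
      apply mul_pos hspos
      have hbd : t * |v 2| ≤ u 2 / 2 := by
        calc t * |v 2| ≤ (u 2 / (2 * (|v 2| + 1))) * |v 2| :=
              mul_le_mul_of_nonneg_right (le_trans htle hδle2) (abs_nonneg _)
          _ ≤ u 2 / 2 := by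
              rw [div_mul_eq_mul_div, div_le_div_iff₀ (by positivity) (by norm_num)]
              nlinarith [abs_nonneg (v 2)]
      have hv2 : -|v 2| ≤ v 2 := neg_abs_le _
      nlinarith
    · have he : mB (s • (u + t • v)) v = s * (mB u v + t * mB v v) := by
        simp only [mB, Pi.smul_apply, Pi.add_apply, smul_eq_mul]; ring
      rw [he, hmix, hvv]
      simp only [zero_add, mul_one]
      exact mul_pos hspos htpos
  · have h0 : Filter.Tendsto (fun n : ℕ => δ / (n + 1 : ℝ)) Filter.atTop (nhds 0) := by
      have h1 := tendsto_one_div_add_atTop_nhds_zero_nat.const_mul δ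
      have h2 : (fun n : ℕ => δ / (n + 1 : ℝ)) = fun n : ℕ => δ * (1 / (n + 1 : ℝ)) := by
        funext n; ring
      rw [h2]
      simpa using h1
    have hcsqrt : Continuous fun t : ℝ => Real.sqrt (1 - t ^ 2) := by fun_prop
    have hF : ContinuousAt (fun t : ℝ => (Real.sqrt (1 - t ^ 2))⁻¹ • (u + t • v)) 0 := by
      apply ContinuousAt.smul (f := fun t : ℝ => (Real.sqrt (1 - t ^ 2))⁻¹) (g := fun t : ℝ => u + t • v)
      · apply ContinuousAt.inv₀ hcsqrt.continuousAt
        simp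
      · exact (continuous_const.add (continuous_id.smul continuous_const)).continuousAt
    have hcomp := hF.tendsto.comp h0
    simpa [Function.comp_def] using hcomp

-- === separation lemma (L1') ===
lemma sepCirc {x w : V} (hx : UnitSpacelike x) (hw : UnitSpacelike w)
    (hdisj : Disjoint (closure {z | z ∈ circ ∧ 0 < mB z x})
                      (closure {z | z ∈ circ ∧ 0 < mB z w}))
    {u : V} (hu : FutureTimelike u) (h1 : 0 ≤ mB u x) (h2 : 0 ≤ mB u w) : False := by
  obtain ⟨n₁, n₂, α, β, hn₁, hn₂, he₁, he₂, hα, hβ, hdec⟩ := decomp x hu hx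
  have hsum : α * mB n₁ w + β * mB n₂ w = mB u w := by
    rw [hdec, mB_add_left, mB_smul_left, mB_smul_left]
  have hdisj' : ∀ n : V, FutureNull n → 0 ≤ mB n x → 0 ≤ mB n w → False := by
    intro n hn hnx hnw
    have hz : nproj n ∈ circ := nproj_mem_circ hn
    have hzx : 0 ≤ mB (nproj n) x := by
      rw [nproj, mB_smul_left]
      exact mul_nonneg (le_of_lt (inv_pos.mpr hn.2)) hnx
    have hzw : 0 ≤ mB (nproj n) w := by
      rw [nproj, mB_smul_left]
      exact mul_nonneg (le_of_lt (inv_pos.mpr hn.2)) hnw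
    exact Set.disjoint_left.mp hdisj (densCirc hx hz hzx) (densCirc hw hz hzw)
  have hcase : 0 ≤ mB n₁ w ∨ 0 ≤ mB n₂ w := by
    by_contra hcon
    push_neg at hcon
    nlinarith [hcon.1, hcon.2]
  rcases hcase with hc | hc
  · exact hdisj' n₁ hn₁ (he₁ ▸ h1) hc
  · exact hdisj' n₂ hn₂ (he₂ ▸ h1) hc

-- === key mapping lemma ===
lemma keymap (g : V ≃ₗ[ℝ] V) (hgs : Pres g.symm) (vm vp : V) (hvm : UnitSpacelike vm)
    (hpair : (fun u => nproj (g.symm u)) '' {u | u ∈ circ ∧ 0 < mB u vp}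
      = circ \ closure {u | u ∈ circ ∧ 0 < mB u vm})
    {u : V} (hu : FutureTimelike u) (hneg : mB u vm < 0) : 0 < mB (g u) vp := by
  obtain ⟨n₁, n₂, α, β, hn₁, hn₂, he₁, he₂, hα, hβ, hdec⟩ := decomp vm hu hvm
  have himg : ∀ n : V, FutureNull n → mB n vm < 0 → 0 < mB (g n) vp := by
    intro n hn hnneg
    have hz : nproj n ∈ circ := nproj_mem_circ hn
    have hzneg : mB (nproj n) vm < 0 := by
      rw [nproj, mB_smul_left]
      exact mul_neg_of_pos_of_neg (inv_pos.mpr hn.2) hnneg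
    have hznotcl : nproj n ∉ closure {z | z ∈ circ ∧ 0 < mB z vm} := by
      intro hmem
      exact absurd (closure_pos_subset vm hmem) (not_le.mpr hzneg)
    have : nproj n ∈ circ \ closure {z | z ∈ circ ∧ 0 < mB z vm} := ⟨hz, hznotcl⟩
    rw [← hpair] at this
    obtain ⟨y, hy, hyeq⟩ := this
    have hyfn : FutureNull y := futureNull_of_mem_circ hy.1
    have hgsy : FutureNull (g.symm y) := hgs.futureNull hyfn
    set cc : ℝ := (g.symm y) 2 with hcc
    have hccpos : 0 < cc := hgsy.2
    -- n = n 2 • nproj n  and  g (nproj n) = cc⁻¹ • y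
    have hn2 : n = (n 2) • nproj n := by
      rw [show nproj n = (n 2)⁻¹ • n from rfl, smul_smul, mul_inv_cancel₀ (ne_of_gt hn.2), one_smul]
    have hgz : g (nproj n) = cc⁻¹ • y := by
      rw [← hyeq]
      show g (nproj (g.symm y)) = cc⁻¹ • y
      rw [show nproj (g.symm y) = cc⁻¹ • (g.symm y) from rfl, map_smul, g.apply_symm_apply]
    have : mB (g n) vp = (n 2) * (cc⁻¹ * mB y vp) := by
      conv_lhs => rw [hn2]
      rw [map_smul, mB_smul_left, hgz, mB_smul_left]
    rw [this]
    exact mul_pos hn.2 (mul_pos (inv_pos.mpr hccpos) hy.2)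
  have h1 := himg n₁ hn₁ (he₁ ▸ hneg)
  have h2 := himg n₂ hn₂ (he₂ ▸ hneg)
  have : mB (g u) vp = α * mB (g n₁) vp + β * mB (g n₂) vp := by
    rw [hdec, map_add, map_smul, map_smul, mB_add_left, mB_smul_left, mB_smul_left]
  rw [this]
  positivity

-- nonstrict version
lemma keymap' (g : V ≃ₗ[ℝ] V) (hgs : Pres g.symm) (vm vp : V) (hvm : UnitSpacelike vm)
    (hpair : (fun u => nproj (g.symm u)) '' {u | u ∈ circ ∧ 0 < mB u vp}
      = circ \ closure {u | u ∈ circ ∧ 0 < mB u vm})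
    {u : V} (hu : FutureTimelike u) (hle : mB u vm ≤ 0) : 0 ≤ mB (g u) vp := by
  -- perturb u to u - t • vm
  have key : ∀ t : ℝ, 0 < t → t * (2 * |mB u vm| + t) < -mB u u → t * |vm 2| < u 2 →
      0 < mB (g u) vp - t * mB (g vm) vp := by
    intro t ht h1 h2
    have hft : FutureTimelike (u - t • vm) := by
      constructor
      · have he : mB (u - t • vm) (u - t • vm) = mB u u - 2 * t * mB u vm + t^2 * mB vm vm := by
          simp only [mB, Pi.sub_apply, Pi.smul_apply, smul_eq_mul]; ring
        rw [he, hvm]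
        have := le_abs_self (mB u vm)
        have := neg_abs_le (mB u vm)
        nlinarith
      · have he : (u - t • vm) 2 = u 2 - t * vm 2 := by
          simp [Pi.sub_apply, Pi.smul_apply, smul_eq_mul]
        rw [he]
        have := le_abs_self (vm 2)
        nlinarith
    have hneg : mB (u - t • vm) vm < 0 := by
      rw [mB_sub_left, mB_smul_left, hvm]
      nlinarith
    have := keymap g hgs vm vp hvm hpair hft hneg
    have he : mB (g (u - t • vm)) vp = mB (g u) vp - t * mB (g vm) vp := by
      rw [map_sub, map_smul, mB_sub_left, mB_smul_left]
    linarith [he ▸ this]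
  by_contra hcon
  push_neg at hcon
  set K : ℝ := mB (g vm) vp with hK
  set M : ℝ := mB (g u) vp with hM
  have hMneg : M < 0 := hcon
  have huu : 0 < -mB u u := by linarith [hu.1]
  set t₀ : ℝ := min (min ((-mB u u) / (2 * (2 * |mB u vm| + 1)))
      (u 2 / (2 * (|vm 2| + 1)))) (min 1 (if K < 0 then M / (2 * K) else 1)) with ht₀
  have hKpos : K < 0 → 0 < M / (2 * K) := by
    intro hKneg
    apply div_pos_of_neg_of_neg hMneg
    linarith
  have ht₀pos : 0 < t₀ := by
    apply lt_min (lt_min (div_pos huu (by positivity)) (div_pos hu.2 (by positivity)))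
    apply lt_min one_pos
    split_ifs with hKneg
    · exact hKpos hKneg
    · exact one_pos
  have ht₀le1 : t₀ ≤ 1 := le_trans (min_le_right _ _) (min_le_left _ _)
  have hcond1 : t₀ * (2 * |mB u vm| + t₀) < -mB u u := by
    have h1 : t₀ ≤ (-mB u u) / (2 * (2 * |mB u vm| + 1)) :=
      le_trans (min_le_left _ _) (min_le_left _ _)
    have habs : 0 ≤ |mB u vm| := abs_nonneg _
    have hd : 0 < 2 * (2 * |mB u vm| + 1) := by positivity
    rw [le_div_iff₀ hd] at h1
    nlinarith
  have hcond2 : t₀ * |vm 2| < u 2 := by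
    have h1 : t₀ ≤ u 2 / (2 * (|vm 2| + 1)) :=
      le_trans (min_le_left _ _) (min_le_right _ _)
    have habs : 0 ≤ |vm 2| := abs_nonneg _
    have hd : 0 < 2 * (|vm 2| + 1) := by positivity
    rw [le_div_iff₀ hd] at h1
    nlinarith [hu.2]
  have hfinal := key t₀ ht₀pos hcond1 hcond2
  -- hfinal : 0 < M - t₀ * K
  rcases lt_or_ge K 0 with hKneg | hKnn
  · have ht₀le : t₀ ≤ M / (2 * K) := by
      have h' : t₀ ≤ if K < 0 then M / (2 * K) else 1 := by
        rw [ht₀]; exact le_trans (min_le_right _ _) (min_le_right _ _)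
      rwa [if_pos hKneg] at h'
    have hmm : (M / (2 * K)) * K ≤ t₀ * K :=
      mul_le_mul_of_nonpos_right ht₀le (le_of_lt hKneg)
    have hKne : K ≠ 0 := ne_of_lt hKneg
    have hMK : (M / (2 * K)) * K = M / 2 := by field_simp
    nlinarith
  · nlinarith [mul_nonneg (le_of_lt ht₀pos) hKnn]

section Main

variable {m : ℕ} (S : LinSchottky m) (v : Fin m → Bool → V)

lemma hyp_ft {u : V} (hu : u ∈ Hyp) : FutureTimelike u :=
  ⟨by rw [hu.1]; norm_num, hu.2⟩

lemma presG (i : Fin m) : Pres (S.g i) := ⟨(S.hSO i).1, (S.hSO i).2.2⟩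

lemma gp_true (i : Fin m) : S.gp i true = S.g i := rfl
lemma gp_false (i : Fin m) : S.gp i false = (S.g i)⁻¹ := rfl
lemma inv_eq_symm (g : V ≃ₗ[ℝ] V) : g⁻¹ = g.symm := rfl

lemma gp_pres (i : Fin m) (j : Bool) : Pres (S.gp i j) := by
  cases j
  · rw [gp_false, inv_eq_symm]; exact (presG S i).inv
  · rw [gp_true]; exact presG S i

lemma gp_cancel (i : Fin m) (j : Bool) :
    S.gp i (!j) * S.gp i j = 1 := by
  cases j
  · rw [gp_false]; show S.gp i true * _ = 1
    rw [gp_true]; exact mul_inv_cancel _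
  · rw [gp_true]; show S.gp i false * _ = 1
    rw [gp_false]; exact inv_mul_cancel _

section WithHv
variable (hv : ∀ i j, UnitSpacelike (v i j) ∧ S.A i j = {u ∈ circ | 0 < mB u (v i j)})
include hv

lemma hpair_gp (i : Fin m) (j : Bool) :
    (fun u => nproj ((S.gp i j).symm u)) '' {u | u ∈ circ ∧ 0 < mB u (v i j)}
      = circ \ closure {u | u ∈ circ ∧ 0 < mB u (v i (!j))} := by
  have e : ∀ j', arc (S.a i j') (S.b i j') = {u | u ∈ circ ∧ 0 < mB u (v i j')} := by
    intro j'
    exact (hv i j').2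
  cases j
  · -- j = false, gp = (g i)⁻¹, symm = g i
    have h := S.hPair i
    rw [e false, e true] at h
    show (fun u => nproj (((S.g i)⁻¹).symm u)) '' _ = circ \ closure {u | u ∈ circ ∧ 0 < mB u (v i true)}
    have hcoe : ((S.g i)⁻¹).symm = S.g i := rfl
    rw [hcoe]
    exact h
  · have h := S.hPairInv i
    rw [e false, e true] at h
    show (fun u => nproj ((S.g i).symm u)) '' _ = circ \ closure {u | u ∈ circ ∧ 0 < mB u (v i false)}
    have hcoe : (S.g i).symm = (S.g i)⁻¹ := rfl
    rw [hcoe]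
    exact h

lemma key_strict (i : Fin m) (j : Bool) {u : V} (hu : FutureTimelike u)
    (h : mB u (v i (!j)) < 0) : 0 < mB (S.gp i j u) (v i j) :=
  keymap (S.gp i j) (gp_pres S i j).inv (v i (!j)) (v i j) (hv i (!j)).1
    (hpair_gp S v hv i j) hu h

lemma key_nonstrict (i : Fin m) (j : Bool) {u : V} (hu : FutureTimelike u)
    (h : mB u (v i (!j)) ≤ 0) : 0 ≤ mB (S.gp i j u) (v i j) :=
  keymap' (S.gp i j) (gp_pres S i j).inv (v i (!j)) (v i j) (hv i (!j)).1
    (hpair_gp S v hv i j) hu h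

lemma sepCirc' (p q : Fin m × Bool) (hne : p ≠ q) {u : V} (hu : FutureTimelike u)
    (h1 : 0 ≤ mB u (v p.1 p.2)) (h2 : 0 ≤ mB u (v q.1 q.2)) : False := by
  have e : ∀ (r : Fin m × Bool), arc (S.a r.1 r.2) (S.b r.1 r.2)
      = {z | z ∈ circ ∧ 0 < mB z (v r.1 r.2)} := by
    intro r
    exact (hv r.1 r.2).2
  have hd := S.hDisjCl p.1 p.2 q.1 q.2 (by
    intro hcon
    apply hne
    exact Prod.ext (congrArg Prod.fst hcon) (congrArg Prod.snd hcon))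
  rw [e p, e q] at hd
  exact sepCirc (hv p.1 p.2).1 (hv q.1 q.2).1 hd hu h1 h2

end WithHv

lemma lmul_apply (f g : V ≃ₗ[ℝ] V) (x : V) : (f * g) x = f (g x) := rfl

lemma wprod_zero (w : ℕ → Fin m × Bool) : S.wprod w 0 = 1 := by
  unfold LinSchottky.wprod; simp

lemma wprod_one (w : ℕ → Fin m × Bool) : S.wprod w 1 = S.gp (w 0).1 (w 0).2 := by
  unfold LinSchottky.wprod
  rw [show List.range 1 = [0] from rfl]
  simp

lemma wprod_succ_head (w : ℕ → Fin m × Bool) (k : ℕ) :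
    S.wprod w (k+1) = S.gp (w 0).1 (w 0).2 * S.wprod (fun t => w (t+1)) k := by
  unfold LinSchottky.wprod
  rw [List.range_succ_eq_map]
  simp [List.map_map, Function.comp_def]

lemma wprod_succ_tail (w : ℕ → Fin m × Bool) (k : ℕ) :
    S.wprod w (k+1) = S.wprod w k * S.gp (w k).1 (w k).2 := by
  unfold LinSchottky.wprod
  rw [List.range_succ]
  simp

lemma M1 (hv : ∀ i j, UnitSpacelike (v i j) ∧ S.A i j = {u ∈ circ | 0 < mB u (v i j)}) :
    ∀ (l : ℕ) (w : ℕ → Fin m × Bool), ReducedWord l w → ∀ u, u ∈ Hyp →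
    mB u (v (w l).1 (!(w l).2)) < 0 →
    S.wprod w (l+1) u ∈ halfPlane (v (w 0).1 (w 0).2) := by
  intro l
  induction l with
  | zero =>
    intro w _ u hu hneg
    rw [wprod_one]
    exact ⟨(gp_pres S (w 0).1 (w 0).2).hyp hu,
      key_strict S v hv (w 0).1 (w 0).2 (hyp_ft hu) hneg⟩
  | succ l ih =>
    intro w hred u hu hneg
    rw [wprod_succ_head, lmul_apply]
    have hred' : ReducedWord l (fun t => w (t+1)) := fun k hk => hred (k+1) (by omega)
    have hx : S.wprod (fun t => w (t+1)) (l+1) u ∈ halfPlane (v (w 1).1 (w 1).2) :=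
      ih (fun t => w (t+1)) hred' u hu hneg
    set x := S.wprod (fun t => w (t+1)) (l+1) u with hxdef
    have hxneg : mB x (v (w 0).1 (!(w 0).2)) < 0 := by
      by_contra hcon
      push_neg at hcon
      refine sepCirc' S v hv (w 1) ((w 0).1, !(w 0).2) ?_ (hyp_ft hx.1) (le_of_lt hx.2) hcon
      intro hcc
      exact hred 0 (by omega) ⟨by rw [hcc], by rw [hcc]⟩
    exact ⟨(gp_pres S (w 0).1 (w 0).2).hyp hx.1,
      key_strict S v hv (w 0).1 (w 0).2 (hyp_ft hx.1) hxneg⟩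

lemma linΔ_neg (hv : ∀ i j, UnitSpacelike (v i j) ∧ S.A i j = {u ∈ circ | 0 < mB u (v i j)})
    {u : V} (hu : u ∈ linΔ v) : u ∈ Hyp ∧ ∀ i j, mB u (v i j) < 0 := by
  refine ⟨hu.1, fun i j => ?_⟩
  by_contra hcon
  push_neg at hcon
  have hcl := mem_closure_halfPlane (hv i j).1 hu.1 hcon
  exact hu.2 (mem_iUnion.mpr ⟨i, mem_iUnion.mpr ⟨j, ⟨hu.1, hcl⟩⟩⟩)

lemma clΔ_le (hv : ∀ i j, UnitSpacelike (v i j) ∧ S.A i j = {u ∈ circ | 0 < mB u (v i j)})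
    {u : V} (hu : u ∈ Hyp ∩ closure (linΔ v)) : ∀ i j, mB u (v i j) ≤ 0 := by
  intro i j
  have hsub : linΔ v ⊆ {z | mB z (v i j) ≤ 0} := fun z hz =>
    le_of_lt ((linΔ_neg S v hv hz).2 i j)
  have hcl : closure (linΔ v) ⊆ {z | mB z (v i j) ≤ 0} :=
    closure_minimal hsub (isClosed_le (continuous_mB_left (v i j)) continuous_const)
  exact hcl hu.2

lemma exists_word {γ : V ≃ₗ[ℝ] V} (hγ : γ ∈ S.G) :
    γ = 1 ∨ ∃ l w, ReducedWord l w ∧ γ = S.wprod w (l+1) := by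
  have step : ∀ (i : Fin m) (j : Bool) (γ' : V ≃ₗ[ℝ] V),
      (γ' = 1 ∨ ∃ l w, ReducedWord l w ∧ γ' = S.wprod w (l+1)) →
      (S.gp i j * γ' = 1 ∨ ∃ l w, ReducedWord l w ∧ S.gp i j * γ' = S.wprod w (l+1)) := by
    intro i j γ' h
    rcases h with rfl | ⟨l, w, hred, rfl⟩
    · right
      exact ⟨0, fun _ => (i, j), fun k hk => absurd hk (Nat.not_lt_zero k),
        by rw [mul_one, wprod_one]⟩
    · by_cases hc : i = (w 0).1 ∧ j = !(w 0).2
      · obtain ⟨rfl, rfl⟩ := hc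
        have hmul : S.gp (w 0).1 (!(w 0).2) * S.wprod w (l+1) = S.wprod (fun t => w (t+1)) l := by
          rw [wprod_succ_head, ← mul_assoc, gp_cancel, one_mul]
        rw [hmul]
        rcases Nat.eq_zero_or_pos l with rfl | hl
        · left; exact wprod_zero S _
        · right
          obtain ⟨l', rfl⟩ : ∃ l', l = l' + 1 := ⟨l - 1, by omega⟩
          exact ⟨l', fun t => w (t+1), fun k hk => hred (k+1) (by omega), rfl⟩
      · right
        refine ⟨l+1, fun t => match t with | 0 => (i, j) | (t+1) => w t, ?_, ?_⟩
        · intro k hk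
          match k with
          | 0 =>
            intro hcc
            apply hc
            refine ⟨hcc.1.symm, ?_⟩
            have := hcc.2
            simp only at this
            rw [this, Bool.not_not]
          | (k+1) => exact hred k (by omega)
        · exact (wprod_succ_head S
            (fun t => match t with | 0 => (i, j) | (t+1) => w t) (l+1)).symm
  unfold LinSchottky.G at hγ
  induction hγ using Subgroup.closure_induction_left with
  | one => left; rfl
  | mul_left x hx y _ ih =>
    obtain ⟨i, rfl⟩ := hx
    exact step i true y ih
  | inv_mul_cancel x hx y _ ih =>
    obtain ⟨i, rfl⟩ := hx
    exact step i false y ih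

end Main

theorem stmt8 {m : ℕ} (S : LinSchottky m) (v : Fin m → Bool → V)
    (hv : ∀ i j, UnitSpacelike (v i j) ∧ S.A i j = {u ∈ circ | 0 < mB u (v i j)}) :
    (∀ (l : ℕ) (w : ℕ → Fin m × Bool), ReducedWord l w →
      ⇑(S.wprod w (l + 1)) '' linΔ v ⊆ halfPlane (v (w 0).1 (w 0).2)) ∧
    (∀ γ : V ≃ₗ[ℝ] V, γ ∈ S.G → γ ≠ 1 → ⇑γ '' linΔ v ∩ linΔ v = ∅) ∧
    (∀ (l : ℕ) (w : ℕ → Fin m × Bool), ReducedWord l w → 1 ≤ l →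
      ⇑(S.wprod w (l + 1)) '' (Hyp ∩ closure (linΔ v)) ∩ (Hyp ∩ closure (linΔ v)) = ∅) := by
  have part1 : ∀ (l : ℕ) (w : ℕ → Fin m × Bool), ReducedWord l w →
      ⇑(S.wprod w (l + 1)) '' linΔ v ⊆ halfPlane (v (w 0).1 (w 0).2) := by
    intro l w hred
    rintro x ⟨u, hu, rfl⟩
    obtain ⟨huH, huneg⟩ := linΔ_neg S v hv hu
    exact M1 S v hv l w hred u huH (huneg (w l).1 (!(w l).2))
  refine ⟨part1, ?_, ?_⟩
  · intro γ hγ hγ1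
    rcases exists_word S hγ with rfl | ⟨l, w, hred, rfl⟩
    · exact absurd rfl hγ1
    · rw [eq_empty_iff_forall_notMem]
      rintro x ⟨hx1, hx2⟩
      have hhp := part1 l w hred hx1
      have hxneg := (linΔ_neg S v hv hx2).2 (w 0).1 (w 0).2
      exact absurd hhp.2 (not_lt.mpr (le_of_lt hxneg))
  · intro l w hred hl
    obtain ⟨l', rfl⟩ : ∃ l', l = l' + 1 := ⟨l - 1, by omega⟩
    rw [eq_empty_iff_forall_notMem]
    rintro x ⟨⟨u, hu, rfl⟩, hx2⟩
    have hule := clΔ_le S v hv hu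
    set p := w (l' + 1) with hp
    set x₁ := S.gp p.1 p.2 u with hx₁def
    have hx₁ft : FutureTimelike x₁ := (gp_pres S p.1 p.2).2 u (hyp_ft hu.1)
    have hx₁Hyp : x₁ ∈ Hyp := (gp_pres S p.1 p.2).hyp hu.1
    have hx₁ge : 0 ≤ mB x₁ (v p.1 p.2) :=
      key_nonstrict S v hv p.1 p.2 (hyp_ft hu.1) (hule p.1 (!p.2))
    have hx₁neg : mB x₁ (v (w l').1 (!(w l').2)) < 0 := by
      by_contra hcon
      push_neg at hcon
      refine sepCirc' S v hv p ((w l').1, !(w l').2) ?_ hx₁ft hx₁ge hcon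
      intro hcc
      rw [hp] at hcc
      exact hred l' (by omega) ⟨by rw [hcc], by rw [hcc]⟩
    have hred' : ReducedWord l' w := fun k hk => hred k (by omega)
    have hfin := M1 S v hv l' w hred' x₁ hx₁Hyp hx₁neg
    have heq : S.wprod w (l' + 1 + 1) u = S.wprod w (l' + 1) x₁ := by
      rw [wprod_succ_tail, lmul_apply]
    rw [heq] at hx2
    have := clΔ_le S v hv hx2 (w 0).1 (w 0).2
    exact absurd hfin.2 (not_lt.mpr this)
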